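/- Let f be μ-strongly convex and differentiable on a polytope S = conv{v^1,…,v^M} with facial distance ψ_S, let x* be the minimizer of f over S, and let x ∈ S with decomposition x = ∑_j λ_j v^j, λ ∈ Δ_M, with vertex-support V := {j : λ_j > 0}. Then there exist η ∈ [0,2], j₁ ∈ V and j₂ ∈ [M] such that f(x) - f(x*) ≤ (η/2)⟨∇f(x), v^{j₁} - v^{j₂}⟩ - (μψ_S²/8)η². -/

import Mathlib

open scoped RealInnerProductSpace

/-- Extract a `Fin M`-indexed convex representation from convex hull membership. -/
lemma exists_rep {E : Type*} [AddCommGroup E] [Module ℝ E] {M : ℕ}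
    (v : Fin M → E) {y : E} (hy : y ∈ convexHull ℝ (Set.range v)) :
    ∃ μ ∈ stdSimplex ℝ (Fin M), ∑ j, μ j • v j = y := by
  classical
  rw [convexHull_range_eq_exists_affineCombination] at hy
  obtain ⟨s, w, hw0, hw1, hy⟩ := hy
  rw [affineCombination_eq_centerMass hw1, Finset.centerMass_eq_of_sum_1 _ _ hw1] at hy
  refine ⟨fun j => if j ∈ s then w j else 0, ⟨fun j => ?_, ?_⟩, ?_⟩
  · by_cases h : j ∈ s <;> simp [h, hw0 j]
  · rw [Finset.sum_ite_mem, Finset.univ_inter, hw1]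
  · rw [← hy]
    have h1 : ∀ j : Fin M, (if j ∈ s then w j else 0) • v j = if j ∈ s then w j • v j else 0 :=
      fun j => by by_cases h : j ∈ s <;> simp [h]
    simp only [h1]
    rw [Finset.sum_ite_mem, Finset.univ_inter]

/-- Extreme sets absorb convex combinations with positive weights. -/
lemma extreme_absorb {E : Type*} [AddCommGroup E] [Module ℝ E] {ι : Type*}
    {S F : Set E} (hS : Convex ℝ S) (hSF : IsExtreme ℝ S F) :
    ∀ (t : Finset ι) (c : ι → ℝ) (p : ι → E), (∀ i ∈ t, 0 ≤ c i) → (∑ i ∈ t, c i = 1) →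
      (∀ i ∈ t, p i ∈ S) → ((∑ i ∈ t, c i • p i) ∈ F) → ∀ i ∈ t, 0 < c i → p i ∈ F := by
  classical
  intro t
  induction t using Finset.induction_on with
  | empty => intro c p _ hc1 _ _ i hi; exact absurd hi (Finset.notMem_empty i)
  | @insert j t hjt ih =>
    intro c p hc0 hc1 hpS hmem i hi hci
    rw [Finset.sum_insert hjt] at hc1 hmem
    have hct0 : ∀ i' ∈ t, 0 ≤ c i' := fun i' hi' => hc0 i' (Finset.mem_insert_of_mem hi')
    have hctsum : 0 ≤ ∑ i' ∈ t, c i' := Finset.sum_nonneg hct0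
    have hcj0 : 0 ≤ c j := hc0 j (Finset.mem_insert_self j t)
    have hcj1 : c j ≤ 1 := by linarith
    rcases eq_or_lt_of_le hcj1 with hcj | hcj
    · have h0 : ∑ i' ∈ t, c i' = 0 := by linarith
      have hz : ∀ i' ∈ t, c i' = 0 :=
        fun i' hi' => ((Finset.sum_eq_zero_iff_of_nonneg hct0).mp h0) i' hi'
      have hsum0 : ∑ i' ∈ t, c i' • p i' = 0 :=
        Finset.sum_eq_zero fun i' hi' => by rw [hz i' hi', zero_smul]
      rw [hsum0, add_zero, hcj, one_smul] at hmem
      rcases Finset.mem_insert.mp hi with rfl | hit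
      · exact hmem
      · exact absurd (hz i hit) (ne_of_gt hci)
    · have hd : 0 < 1 - c j := by linarith
      have hdne : (1 - c j) ≠ 0 := ne_of_gt hd
      set z : E := ∑ i' ∈ t, (c i' / (1 - c j)) • p i' with hzdef
      have hzsum : ∑ i' ∈ t, c i' / (1 - c j) = 1 := by
        rw [← Finset.sum_div]; field_simp; linarith
      have hzS : z ∈ S := hS.sum_mem (fun i' hi' => div_nonneg (hct0 i' hi') hd.le) hzsum
        (fun i' hi' => hpS i' (Finset.mem_insert_of_mem hi'))
      have hzc : (1 - c j) • z = ∑ i' ∈ t, c i' • p i' := by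
        rw [hzdef, Finset.smul_sum]
        exact Finset.sum_congr rfl fun i' _ => by rw [smul_smul, mul_div_cancel₀ _ hdne]
      rcases eq_or_lt_of_le hcj0 with hcj0' | hcj0'
      · rw [← hcj0', zero_smul, zero_add] at hmem
        have hres := ih c p hct0 (by linarith) (fun i' hi' => hpS i' (Finset.mem_insert_of_mem hi')) hmem
        rcases Finset.mem_insert.mp hi with rfl | hit
        · exact absurd hci (by linarith)
        · exact hres i hit hci
      · have hseg : (c j • p j + ∑ i' ∈ t, c i' • p i') ∈ openSegment ℝ (p j) z :=
          ⟨c j, 1 - c j, hcj0', hd, by ring, by rw [hzc]⟩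
        obtain ⟨hpjF, hzF⟩ := And.intro (hSF.2 (hpS j (Finset.mem_insert_self j t)) hzS hmem hseg)
          (hSF.right_mem_of_mem_openSegment (hpS j (Finset.mem_insert_self j t)) hzS hmem hseg)
        rcases Finset.mem_insert.mp hi with rfl | hit
        · exact hpjF
        · exact ih (fun i' => c i' / (1 - c j)) p (fun i' hi' => div_nonneg (hct0 i' hi') hd.le)
            hzsum (fun i' hi' => hpS i' (Finset.mem_insert_of_mem hi'))
            (by rw [← hzdef]; exact hzF) i hit (div_pos hci hd)

lemma seg_helper {E : Type*} [AddCommGroup E] [Module ℝ E] {S : Set E} (hS : Convex ℝ S)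
    {q y z y₁ y₂ : E} (hy₂ : y₂ ∈ S) (hz : z ∈ S)
    {a b t₁ t₂ : ℝ} (ha : 0 < a) (hb : 0 < b) (hab : a + b = 1)
    (ht₁ : 0 < t₁) (ht₂ : 0 < t₂) (ht : t₁ + t₂ = 1)
    (hq : a • y + b • z = q) (hy : t₁ • y₁ + t₂ • y₂ = y) :
    ∃ z₁ ∈ S, q ∈ openSegment ℝ y₁ z₁ := by
  have ha1 : a ≤ 1 := by linarith
  have ht₁1 : t₁ < 1 := by linarith
  have he : 0 < 1 - a * t₁ := by nlinarith
  have hene : (1 - a * t₁) ≠ 0 := ne_of_gt he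
  refine ⟨(1 - a * t₁)⁻¹ • ((a * t₂) • y₂ + b • z), ?_, ?_⟩
  · have hsum : a * t₂ * (1 - a * t₁)⁻¹ + b * (1 - a * t₁)⁻¹ = 1 := by
      field_simp
      nlinarith
    have := hS hy₂ hz (by positivity) (by positivity) hsum
    convert this using 1
    module
  · refine ⟨a * t₁, 1 - a * t₁, by positivity, he, by ring, ?_⟩
    rw [smul_smul, mul_inv_cancel₀ hene, one_smul, ← hq, ← hy]
    module
/-- The minimal extreme set containing `q` is extreme. -/
lemma minface_extreme {E : Type*} [AddCommGroup E] [Module ℝ E] {S : Set E}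
    (hS : Convex ℝ S) (q : E) :
    IsExtreme ℝ S {y | y ∈ S ∧ ∃ z ∈ S, q ∈ openSegment ℝ y z} := by
  constructor
  · exact fun y hy => hy.1
  · rintro y₁ hy₁ y₂ hy₂ y ⟨hyS, z, hzS, a, b, ha, hb, hab, habq⟩ ⟨t₁, t₂, ht₁, ht₂, ht, hty⟩
    refine (?_ : _ ∧ (y₂ ∈ S ∧ ∃ z ∈ S, q ∈ openSegment ℝ y₂ z)).1
    constructor
    · obtain ⟨z₁, hz₁, hseg⟩ := seg_helper hS hy₂ hzS ha hb hab ht₁ ht₂ ht habq hty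
      exact ⟨hy₁, z₁, hz₁, hseg⟩
    · obtain ⟨z₁, hz₁, hseg⟩ := seg_helper hS hy₁ hzS ha hb hab ht₂ ht₁ (by linarith) habq
        (by rw [← hty]; abel)
      exact ⟨hy₂, z₁, hz₁, hseg⟩

noncomputable def facialDist {d : ℕ} (V : Set (EuclideanSpace ℝ (Fin d))) : ℝ :=
  sInf { r : ℝ | ∃ F : Set (EuclideanSpace ℝ (Fin d)),
    IsExtreme ℝ (convexHull ℝ V) F ∧ F.Nonempty ∧ F ≠ convexHull ℝ V ∧
    r = sInf { t : ℝ | ∃ a ∈ F, ∃ b ∈ convexHull ℝ (V \ F), t = dist a b } }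

set_option maxHeartbeats 2000000 in
theorem stmt14 {d M : ℕ} (v : Fin M → EuclideanSpace ℝ (Fin d))
    (S : Set (EuclideanSpace ℝ (Fin d))) (hSdef : S = convexHull ℝ (Set.range v))
    (μ : ℝ) (hμ : 0 < μ)
    (f : EuclideanSpace ℝ (Fin d) → ℝ)
    (g : EuclideanSpace ℝ (Fin d) → EuclideanSpace ℝ (Fin d))
    (hgrad : ∀ y ∈ S, HasGradientAt f (g y) y)
    (hsc : ∀ a ∈ S, ∀ b ∈ S, f b ≥ f a + ⟪g a, b - a⟫ + μ / 2 * ‖b - a‖ ^ 2)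
    (xstar : EuclideanSpace ℝ (Fin d)) (hxs : xstar ∈ S)
    (hmin : ∀ y ∈ S, f xstar ≤ f y)
    (lam : Fin M → ℝ) (hlam : lam ∈ stdSimplex ℝ (Fin M))
    (x : EuclideanSpace ℝ (Fin d)) (hx : x = ∑ j, lam j • v j) :
    ∃ η ∈ Set.Icc (0 : ℝ) 2, ∃ j₁ : Fin M, 0 < lam j₁ ∧ ∃ j₂ : Fin M,
      f x - f xstar ≤
        η / 2 * ⟪g x, v j₁ - v j₂⟫ - μ * (facialDist (Set.range v)) ^ 2 / 8 * η ^ 2 := by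
  classical
  have hvS : ∀ j, v j ∈ S := fun j => by
    rw [hSdef]; exact subset_convexHull ℝ _ ⟨j, rfl⟩
  have hSconv : Convex ℝ S := by rw [hSdef]; exact convex_convexHull ℝ _
  have hxS : x ∈ S := by
    rw [hx]; exact hSconv.sum_mem (fun i _ => hlam.1 i) hlam.2 (fun i _ => hvS i)
  set D : Set (Fin M → ℝ) := {m | m ∈ stdSimplex ℝ (Fin M) ∧ ∑ j, m j • v j = xstar}
    with hD
  have hDne : D.Nonempty := by
    obtain ⟨m, hm, hms⟩ := exists_rep v (by rw [← hSdef]; exact hxs)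
    exact ⟨m, hm, hms⟩
  have hDcp : IsCompact D := by
    have hDeq : D = stdSimplex ℝ (Fin M) ∩
        ((fun m : Fin M → ℝ => ∑ j, m j • v j) ⁻¹' {xstar}) := by
      ext m; simp [hD, Set.mem_inter_iff, Set.mem_preimage]
    rw [hDeq]
    exact (isCompact_stdSimplex _ _).inter_right
      (isClosed_singleton.preimage
        (continuous_finset_sum _ fun j _ => (continuous_apply j).smul continuous_const))
  obtain ⟨lams, hlamsD, hminL⟩ := hDcp.exists_isMinOn hDne
    (Continuous.continuousOn
      (continuous_finset_sum _ fun j _ => (continuous_const.sub (continuous_apply j)).abs))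
  have hminL' : ∀ m ∈ D, ∑ j, |lam j - lams j| ≤ ∑ j, |lam j - m j| :=
    fun m hm => isMinOn_iff.mp hminL m hm
  have hlams : lams ∈ stdSimplex ℝ (Fin M) := hlamsD.1
  have hxstar_eq : ∑ j, lams j • v j = xstar := hlamsD.2
  set uu : Fin M → ℝ := fun j => max (lam j - lams j) 0 with huu
  set ww : Fin M → ℝ := fun j => max (lams j - lam j) 0 with hww
  have huu0 : ∀ j, 0 ≤ uu j := fun j => le_max_right _ _
  have hww0 : ∀ j, 0 ≤ ww j := fun j => le_max_right _ _
  have huw : ∀ j, uu j - ww j = lam j - lams j := fun j => by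
    simp only [huu, hww]
    rcases le_total (lam j) (lams j) with h | h
    · rw [max_eq_right (by linarith : lam j - lams j ≤ 0),
        max_eq_left (by linarith : (0:ℝ) ≤ lams j - lam j)]; ring
    · rw [max_eq_left (by linarith : (0:ℝ) ≤ lam j - lams j),
        max_eq_right (by linarith : lams j - lam j ≤ 0)]; ring
  have habsuw : ∀ j, uu j + ww j = |lam j - lams j| := fun j => by
    simp only [huu, hww]
    rcases le_total (lam j) (lams j) with h | h
    · rw [max_eq_right (by linarith : lam j - lams j ≤ 0),
        max_eq_left (by linarith : (0:ℝ) ≤ lams j - lam j),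
        abs_of_nonpos (by linarith : lam j - lams j ≤ 0)]; ring
    · rw [max_eq_left (by linarith : (0:ℝ) ≤ lam j - lams j),
        max_eq_right (by linarith : lams j - lam j ≤ 0),
        abs_of_nonneg (by linarith : (0:ℝ) ≤ lam j - lams j)]; ring
  set s : ℝ := ∑ j, uu j with hsdef
  have hs0 : 0 ≤ s := Finset.sum_nonneg fun j _ => huu0 j
  have hsum0 : ∑ j, (lam j - lams j) = 0 := by
    rw [Finset.sum_sub_distrib, hlam.2, hlams.2, sub_self]
  have hws : ∑ j, ww j = s := by
    have h1 : ∑ j, (uu j - ww j) = 0 := by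
      rw [Finset.sum_congr rfl fun j _ => huw j]; exact hsum0
    rw [Finset.sum_sub_distrib] at h1
    linarith
  have hLsum : ∑ j, |lam j - lams j| = 2 * s := by
    rw [← Finset.sum_congr rfl fun j _ => habsuw j, Finset.sum_add_distrib, hws, ← hsdef]
    ring
  have hupos : ∀ j, 0 < uu j → lams j < lam j := by
    intro j hj
    by_contra h
    push_neg at h
    simp only [huu] at hj
    simp only [max_eq_right (by linarith : lam j - lams j ≤ 0)] at hj
    exact lt_irrefl 0 hj
  rcases eq_or_lt_of_le hs0 with hs0' | hspos
  · -- degenerate case : lam = lams, x = xstar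
    have hu_all : ∀ j, uu j = 0 := fun j =>
      ((Finset.sum_eq_zero_iff_of_nonneg fun j _ => huu0 j).mp hs0'.symm) j (Finset.mem_univ j)
    have hw_all : ∀ j, ww j = 0 := fun j =>
      ((Finset.sum_eq_zero_iff_of_nonneg fun j _ => hww0 j).mp (by rw [hws, ← hs0'])) j
        (Finset.mem_univ j)
    have hlameq : lam = lams := by
      funext j
      have h1 := huw j
      rw [hu_all j, hw_all j] at h1
      linarith
    obtain ⟨j₁, hj₁⟩ : ∃ j, 0 < lam j := by
      by_contra h
      push_neg at h
      have : ∑ j, lam j ≤ 0 := Finset.sum_nonpos fun j _ => h j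
      rw [hlam.2] at this; linarith
    have hxx : x = xstar := by rw [hx, hlameq, hxstar_eq]
    refine ⟨0, ⟨le_refl 0, by norm_num⟩, j₁, hj₁, j₁, ?_⟩
    rw [hxx]
    norm_num
  · -- main case
    have hsne : s ≠ 0 := ne_of_gt hspos
    set q : EuclideanSpace ℝ (Fin d) := s⁻¹ • ∑ j, ww j • v j with hqdef
    set p : EuclideanSpace ℝ (Fin d) := s⁻¹ • ∑ j, uu j • v j with hpdef
    have hqsum : q = ∑ j, (s⁻¹ * ww j) • v j := by
      rw [hqdef, Finset.smul_sum]
      exact Finset.sum_congr rfl fun j _ => smul_smul _ _ _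
    have hpsum : p = ∑ j, (s⁻¹ * uu j) • v j := by
      rw [hpdef, Finset.smul_sum]
      exact Finset.sum_congr rfl fun j _ => smul_smul _ _ _
    have hqS : q ∈ S := by
      rw [hqsum]
      exact hSconv.sum_mem (fun j _ => mul_nonneg (inv_nonneg.mpr hs0) (hww0 j))
        (by rw [← Finset.mul_sum, hws]; field_simp) (fun j _ => hvS j)
    set G : Set (EuclideanSpace ℝ (Fin d)) :=
      {y | y ∈ S ∧ ∃ z ∈ S, q ∈ openSegment ℝ y z} with hG
    have hGex : IsExtreme ℝ S G := minface_extreme hSconv q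
    have hqG : q ∈ G := ⟨hqS, q, hqS, by rw [openSegment_same]; exact Set.mem_singleton q⟩
    have habs : ∀ j, 0 < ww j → v j ∈ G := by
      intro j hj
      refine extreme_absorb hSconv hGex Finset.univ (fun i => s⁻¹ * ww i) v
        (fun i _ => mul_nonneg (inv_nonneg.mpr hs0) (hww0 i)) ?_ (fun i _ => hvS i) ?_
        j (Finset.mem_univ j) (mul_pos (inv_pos.mpr hspos) hj)
      · rw [← Finset.mul_sum, hws]; field_simp
      · rw [← hqsum]; exact hqG
    -- the key exchange argument
    have hkey : ∀ k, 0 < uu k → v k ∉ G := by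
      intro k hk hmemG
      rw [hG, Set.mem_setOf_eq] at hmemG
      obtain ⟨hvkS, z, hzS, hseg⟩ := hmemG
      rw [openSegment] at hseg
      obtain ⟨a, b, ha, hb, hab, habq⟩ := hseg
      obtain ⟨c, hc, hcz⟩ := exists_rep v (by rw [← hSdef]; exact hzS)
      have hlamk : lams k < lam k := hupos k hk
      have hwk : ww k = 0 := by
        simp only [hww]; exact max_eq_right (by linarith)
      set θ : ℝ := min 1 (uu k / s) with hθ
      have hθ0 : 0 < θ := lt_min one_pos (div_pos hk hspos)
      have hθ1 : θ ≤ 1 := min_le_left _ _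
      have hθs : θ * s ≤ uu k := by
        have h1 : θ ≤ uu k / s := min_le_right _ _
        calc θ * s ≤ (uu k / s) * s := by nlinarith
          _ = uu k := by field_simp
      have hck1 : c k ≤ 1 := (mem_Icc_of_mem_stdSimplex hc k).2
      set m : Fin M → ℝ :=
        fun j => lams j - θ * ww j + θ * s * (if j = k then a else 0) + θ * s * b * c j with hm
      have hwle : ∀ j, ww j ≤ lams j := by
        intro j
        simp only [hww]
        rcases le_total (lams j - lam j) 0 with h | h
        · rw [max_eq_right h]; exact hlams.1 j
        · rw [max_eq_left h]; linarith [hlam.1 j]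
      have hmD : m ∈ D := by
        refine ⟨⟨?_, ?_⟩, ?_⟩
        · intro j
          have h1 : θ * ww j ≤ lams j :=
            le_trans (mul_le_of_le_one_left (hww0 j) hθ1) (hwle j)
          have hite : (0:ℝ) ≤ (if j = k then a else 0) := by
            split
            · exact ha.le
            · exact le_refl 0
          have h2 : 0 ≤ θ * s * (if j = k then a else 0) :=
            mul_nonneg (by positivity) hite
          have h3 : 0 ≤ θ * s * b * c j := by
            have := hc.1 j
            positivity
          simp only [hm]
          linarith
        · simp only [hm]
          rw [Finset.sum_add_distrib, Finset.sum_add_distrib, Finset.sum_sub_distrib,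
            ← Finset.mul_sum, ← Finset.mul_sum, ← Finset.mul_sum, hws, hlams.2, hc.2,
            Finset.sum_ite_eq' Finset.univ k (fun _ => a)]
          simp only [Finset.mem_univ, if_true]
          nlinarith
        · have e0 : ∀ j, m j • v j = lams j • v j - (θ * ww j) • v j
              + (θ * s * (if j = k then a else 0)) • v j + (θ * s * b * c j) • v j := by
            intro j
            simp only [hm]
            rw [add_smul, add_smul, sub_smul]
          have e1 : ∑ j, (θ * ww j) • v j = (θ * s) • q := by
            rw [hqdef, smul_smul, mul_assoc, mul_inv_cancel₀ hsne, mul_one, Finset.smul_sum]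
            exact Finset.sum_congr rfl fun j _ => (smul_smul _ _ _).symm
          have e2 : ∑ j, (θ * s * (if j = k then a else 0)) • v j = (θ * s * a) • v k := by
            have : ∀ j, (θ * s * (if j = k then a else 0)) • v j
                = if j = k then (θ * s * a) • v j else 0 := by
              intro j
              split <;> simp [*]
            simp only [this]
            rw [Finset.sum_ite_eq' Finset.univ k (fun j => (θ * s * a) • v j)]
            simp
          have e3 : ∑ j, (θ * s * b * c j) • v j = (θ * s * b) • z := by
            rw [← hcz, Finset.smul_sum]
            exact Finset.sum_congr rfl fun j _ => by rw [smul_smul]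
          have e4 : (θ * s * a) • v k + (θ * s * b) • z = (θ * s) • q := by
            rw [← habq, smul_add, smul_smul, smul_smul]
          simp only [e0]
          rw [Finset.sum_add_distrib, Finset.sum_add_distrib, Finset.sum_sub_distrib,
            e1, e2, e3, hxstar_eq]
          rw [add_assoc, e4]
          abel
      have hbound : ∀ j ∈ Finset.univ.erase k,
          |lam j - m j| ≤ uu j + (1 - θ) * ww j + θ * s * b * c j := by
        intro j hj
        have hjk : j ≠ k := Finset.ne_of_mem_erase hj
        have h1 := huw j
        have h2 := hww0 j
        have h3 := huu0 j
        have h4 : 0 ≤ θ * s * b * c j := by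
          have := hc.1 j
          positivity
        have h5 : 0 ≤ (1 - θ) * ww j := mul_nonneg (by linarith) h2
        simp only [hm, if_neg hjk]
        rw [abs_le]
        constructor <;> nlinarith
      have hk_exact : |lam k - m k| = uu k - θ * s * (a + b * c k) := by
        have h1 := huw k
        have hval : lam k - m k = uu k - θ * s * (a + b * c k) := by
          rw [hwk] at h1
          simp only [hm, eq_self_iff_true, if_true, hwk]
          ring_nf
          ring_nf at h1
          linarith
        have hbck : b * c k ≤ b := by nlinarith [hc.1 k]
        have hack : a + b * c k ≤ 1 := by linarith
        have hts : (0:ℝ) ≤ θ * s := by positivity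
        have h2 : θ * s * (a + b * c k) ≤ θ * s :=
          (mul_le_mul_of_nonneg_left hack hts).trans_eq (mul_one _)
        rw [hval]
        exact abs_of_nonneg (by linarith [hθs])
      have hsum_bound : ∑ j, (uu j + (1 - θ) * ww j + θ * s * b * c j)
          = 2 * s - θ * s + θ * s * b := by
        rw [Finset.sum_add_distrib, Finset.sum_add_distrib, ← Finset.mul_sum, ← Finset.mul_sum,
          hws, hc.2, ← hsdef]
        ring
      have hLm : ∑ j, |lam j - m j| < 2 * s := by
        have h1 : ∑ j, |lam j - m j|
            = |lam k - m k| + ∑ j ∈ Finset.univ.erase k, |lam j - m j| :=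
          (Finset.add_sum_erase _ _ (Finset.mem_univ k)).symm
        have h2 : ∑ j ∈ Finset.univ.erase k, |lam j - m j|
            ≤ ∑ j ∈ Finset.univ.erase k, (uu j + (1 - θ) * ww j + θ * s * b * c j) :=
          Finset.sum_le_sum hbound
        have h3 : ∑ j ∈ Finset.univ.erase k, (uu j + (1 - θ) * ww j + θ * s * b * c j)
            = (2 * s - θ * s + θ * s * b) - (uu k + (1 - θ) * ww k + θ * s * b * c k) := by
          rw [Finset.sum_erase_eq_sub (Finset.mem_univ k), hsum_bound]
        have h4 : 0 ≤ θ * s * b * c k := by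
          have := hc.1 k
          positivity
        have h5 : 0 < θ * s * a := by positivity
        rw [hwk] at h3
        have hexp : θ * s * (a + b * c k) = θ * s * a + θ * s * b * c k := by ring
        have hba : θ * s * b = θ * s - θ * s * a := by
          have hb' : b = 1 - a := by linarith
          rw [hb']; ring
        rw [h1, hk_exact]
        have h6 : 0 ≤ θ * s := by positivity
        linarith
      rw [← hLsum] at hLm
      exact absurd (hminL' m hmD) (not_le.mpr hLm)
    -- choose j₁ and j₂
    set A : Finset (Fin M) := Finset.univ.filter (fun j => 0 < uu j) with hA
    have hAne : A.Nonempty := by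
      obtain ⟨k₀, hk₀⟩ : ∃ k, 0 < uu k := by
        by_contra h
        push_neg at h
        have : s ≤ 0 := Finset.sum_nonpos fun j _ => h j
        linarith
      exact ⟨k₀, Finset.mem_filter.mpr ⟨Finset.mem_univ k₀, hk₀⟩⟩
    obtain ⟨j₁, hj₁A, hj₁max⟩ := A.exists_max_image (fun j => ⟪g x, v j⟫) hAne
    have hj₁u : 0 < uu j₁ := (Finset.mem_filter.mp hj₁A).2
    have hlamj₁ : 0 < lam j₁ := lt_of_le_of_lt (hlams.1 j₁) (hupos j₁ hj₁u)
    obtain ⟨j₂, _, hj₂min⟩ := Finset.univ.exists_min_image (fun j => ⟪g x, v j⟫)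
      ⟨j₁, Finset.mem_univ j₁⟩
    -- gap bound
    have hxm : x - xstar = ∑ j, (lam j - lams j) • v j := by
      rw [hx, ← hxstar_eq, ← Finset.sum_sub_distrib]
      exact Finset.sum_congr rfl fun j _ => (sub_smul _ _ _).symm
    have hinner : ⟪g x, x - xstar⟫ = ∑ j, (lam j - lams j) * ⟪g x, v j⟫ := by
      rw [hxm, inner_sum]
      exact Finset.sum_congr rfl fun j _ => real_inner_smul_right _ _ _
    have hub : ∑ j, uu j * ⟪g x, v j⟫ ≤ s * ⟪g x, v j₁⟫ := by
      rw [hsdef, Finset.sum_mul]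
      refine Finset.sum_le_sum fun j _ => ?_
      rcases eq_or_lt_of_le (huu0 j) with h | h
      · rw [← h]; simp
      · exact mul_le_mul_of_nonneg_left
          (hj₁max j (Finset.mem_filter.mpr ⟨Finset.mem_univ j, h⟩)) (huu0 j)
    have hlb : s * ⟪g x, v j₂⟫ ≤ ∑ j, ww j * ⟪g x, v j⟫ := by
      rw [← hws, Finset.sum_mul]
      exact Finset.sum_le_sum fun j _ =>
        mul_le_mul_of_nonneg_left (hj₂min j (Finset.mem_univ j)) (hww0 j)
    have hsplit : ∑ j, (lam j - lams j) * ⟪g x, v j⟫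
        = ∑ j, uu j * ⟪g x, v j⟫ - ∑ j, ww j * ⟪g x, v j⟫ := by
      rw [← Finset.sum_sub_distrib]
      exact Finset.sum_congr rfl fun j _ => by rw [← sub_mul, huw j]
    have hinner_le : ⟪g x, x - xstar⟫ ≤ s * ⟪g x, v j₁ - v j₂⟫ := by
      rw [hinner, hsplit, inner_sub_right, mul_sub]
      linarith
    have hstrong := hsc x hxS xstar hxs
    have hgap : f x - f xstar ≤ ⟪g x, x - xstar⟫ - μ / 2 * ‖x - xstar‖ ^ 2 := by
      have h1 : ⟪g x, xstar - x⟫ = -⟪g x, x - xstar⟫ := by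
        rw [← neg_sub x xstar, inner_neg_right]
      have h2 : ‖xstar - x‖ = ‖x - xstar‖ := norm_sub_rev _ _
      rw [h1, h2] at hstrong
      linarith
    -- facial distance bound
    have hGne : G ≠ convexHull ℝ (Set.range v) := by
      intro h
      exact hkey j₁ hj₁u (by rw [h]; exact subset_convexHull ℝ _ ⟨j₁, rfl⟩)
    have hpmem : p ∈ convexHull ℝ (Set.range v \ G) := by
      have hzero : ∀ j ∈ Finset.univ, j ∉ A → (s⁻¹ * uu j) • v j = 0 := by
        intro j _ hj
        have : ¬ 0 < uu j := fun h => hj (Finset.mem_filter.mpr ⟨Finset.mem_univ j, h⟩)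
        have : uu j = 0 := le_antisymm (not_lt.mp this) (huu0 j)
        rw [this]
        simp
      have hps : p = ∑ j ∈ A, (s⁻¹ * uu j) • v j := by
        rw [hpsum, hA, Finset.sum_filter_of_ne]
        intro j _ hne
        by_contra h
        exact hne (by rw [le_antisymm (not_lt.mp h) (huu0 j)]; simp)
      rw [hps]
      have hsumA : ∑ j ∈ A, s⁻¹ * uu j = 1 := by
        rw [← Finset.mul_sum]
        have : ∑ j ∈ A, uu j = s := by
          rw [hsdef, Finset.sum_filter_of_ne]
          exact fun j _ hne => lt_of_le_of_ne (huu0 j) (Ne.symm hne)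
        rw [this]
        field_simp
      exact (convex_convexHull ℝ _).sum_mem
        (fun j _ => mul_nonneg (inv_nonneg.mpr hs0) (huu0 j)) hsumA
        (fun j hj => subset_convexHull ℝ _
          ⟨⟨j, rfl⟩, hkey j (Finset.mem_filter.mp hj).2⟩)
    set T : Set ℝ := {t | ∃ a ∈ G, ∃ b ∈ convexHull ℝ (Set.range v \ G), t = dist a b} with hT
    have hdistT : dist q p ∈ T := ⟨q, hqG, p, hpmem, rfl⟩
    have hTbdd : BddBelow T := by
      refine ⟨0, ?_⟩
      rintro t ⟨a', _, b', _, rfl⟩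
      exact dist_nonneg
    have houter : sInf T ∈ { r : ℝ | ∃ F : Set (EuclideanSpace ℝ (Fin d)),
        IsExtreme ℝ (convexHull ℝ (Set.range v)) F ∧ F.Nonempty ∧ F ≠ convexHull ℝ (Set.range v) ∧
        r = sInf { t : ℝ | ∃ a ∈ F, ∃ b ∈ convexHull ℝ (Set.range v \ F), t = dist a b } } := by
      exact ⟨G, by rw [← hSdef]; exact hGex, ⟨q, hqG⟩, hGne, rfl⟩
    have houter_bdd : BddBelow { r : ℝ | ∃ F : Set (EuclideanSpace ℝ (Fin d)),
        IsExtreme ℝ (convexHull ℝ (Set.range v)) F ∧ F.Nonempty ∧ F ≠ convexHull ℝ (Set.range v) ∧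
        r = sInf { t : ℝ | ∃ a ∈ F, ∃ b ∈ convexHull ℝ (Set.range v \ F), t = dist a b } } := by
      refine ⟨0, ?_⟩
      rintro r ⟨F, _, _, _, rfl⟩
      apply Real.sInf_nonneg
      rintro t ⟨a', _, b', _, rfl⟩
      exact dist_nonneg
    have hpsi_le : facialDist (Set.range v) ≤ dist q p := by
      rw [facialDist]
      exact le_trans (csInf_le houter_bdd houter) (csInf_le hTbdd hdistT)
    have hpsi0 : 0 ≤ facialDist (Set.range v) := by
      rw [facialDist]
      apply Real.sInf_nonneg
      rintro r ⟨F, _, _, _, rfl⟩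
      apply Real.sInf_nonneg
      rintro t ⟨a', _, b', _, rfl⟩
      exact dist_nonneg
    have hdqp : dist q p * s = ‖x - xstar‖ := by
      have hxps : x - xstar = s • (p - q) := by
        rw [hxm, smul_sub, hpdef, hqdef, smul_smul, smul_smul, mul_inv_cancel₀ hsne,
          one_smul, one_smul, ← Finset.sum_sub_distrib]
        exact Finset.sum_congr rfl fun j _ => by rw [← sub_smul, huw j]
      rw [dist_eq_norm, hxps, norm_smul, Real.norm_eq_abs, abs_of_pos hspos, norm_sub_rev]
      ring
    have hfn : facialDist (Set.range v) * s ≤ ‖x - xstar‖ := by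
      rw [← hdqp]
      nlinarith
    -- assemble
    have hs2 : 2 * s ≤ 2 := by
      have h1 : ∑ j, |lam j - lams j| ≤ ∑ j, (lam j + lams j) := by
        refine Finset.sum_le_sum fun j _ => ?_
        have := abs_sub (lam j) (lams j)
        calc |lam j - lams j| ≤ |lam j| + |lams j| := abs_sub _ _
          _ = lam j + lams j := by
            rw [abs_of_nonneg (hlam.1 j), abs_of_nonneg (hlams.1 j)]
      rw [hLsum] at h1
      rw [Finset.sum_add_distrib, hlam.2, hlams.2] at h1
      linarith
    refine ⟨2 * s, ⟨by positivity, hs2⟩, j₁, hlamj₁, j₂, ?_⟩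
    have hq2 : μ * facialDist (Set.range v) ^ 2 / 8 * (2 * s) ^ 2 ≤ μ / 2 * ‖x - xstar‖ ^ 2 := by
      have h1 : (facialDist (Set.range v) * s) ^ 2 ≤ ‖x - xstar‖ ^ 2 := by
        have h0 : 0 ≤ facialDist (Set.range v) * s := mul_nonneg hpsi0 hs0
        nlinarith [hfn]
      nlinarith
    calc f x - f xstar ≤ ⟪g x, x - xstar⟫ - μ / 2 * ‖x - xstar‖ ^ 2 := hgap
      _ ≤ s * ⟪g x, v j₁ - v j₂⟫ - μ / 2 * ‖x - xstar‖ ^ 2 := by linarith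
      _ ≤ 2 * s / 2 * ⟪g x, v j₁ - v j₂⟫
          - μ * facialDist (Set.range v) ^ 2 / 8 * (2 * s) ^ 2 := by
        have he : 2 * s / 2 = s := by ring
        rw [he]
        linarith
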